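/- arXiv:2308.11016 — 7 statements merged into one kernel-verified Lean document; each statement's English description precedes it below -/
import Mathlib

section
/- The forward shift S is bounded on the Hardy space H^p(T) if and only if the set {K(1,n-1)·γ(n-1)/γ(n) : n ∈ ℕ} is bounded, and in that case ‖S‖ = (sup_n K(1,n-1)·γ(n-1)/γ(n))^{1/p}. -/
open scoped BigOperators
open Classical

/-- An infinite, locally finite rooted tree, presented combinatorially via a
parent function and a level (distance-to-root) function.  Every level is a
finite nonempty set of vertices. -/
structure HTree where
  V : Type
  root : V
  parent : V → V
  level : V → ℕ
  level_root : level root = 0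
  root_of_level_zero : ∀ v, level v = 0 → v = root
  level_parent : ∀ v, v ≠ root → level (parent v) + 1 = level v
  finite_level : ∀ n : ℕ, {v : V | level v = n}.Finite
  nonempty_level : ∀ n : ℕ, {v : V | level v = n}.Nonempty

namespace HTree

variable (T : HTree)

/-- The finite set of vertices at level `n`. -/
noncomputable def levelFinset (n : ℕ) : Finset T.V := (T.finite_level n).toFinset

/-- `γ(n)`, the number of vertices at level `n`. -/
noncomputable def gamma (n : ℕ) : ℕ := (T.levelFinset n).card

/-- The set of `m`-children of a vertex `v`. -/
noncomputable def nChildrenFinset (m : ℕ) (v : T.V) : Finset T.V :=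
  (T.levelFinset (T.level v + m)).filter (fun w => T.parent^[m] w = v)

/-- `γ(m,v)`, the number of `m`-children of `v`. -/
noncomputable def numNChildren (m : ℕ) (v : T.V) : ℕ := (T.nChildrenFinset m v).card

/-- The set of children of a vertex. -/
noncomputable def childrenFinset (v : T.V) : Finset T.V := T.nChildrenFinset 1 v

/-- `γ(1,v)`, the number of children of `v`. -/
noncomputable def numChildren (v : T.V) : ℕ := T.numNChildren 1 v

/-- `K(m,r)`, the maximal number of `m`-children among vertices at level `r`. -/
noncomputable def K (m r : ℕ) : ℕ := (T.levelFinset r).sup (fun v => T.numNChildren m v)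

/-- `M_p^p(n,f)`, the `p`-th power of the `p`-th mean of `|f|` over level `n`. -/
noncomputable def Mpp (p : ℝ) (f : T.V → ℂ) (n : ℕ) : ℝ :=
  (1 / (T.gamma n : ℝ)) * ∑ v ∈ T.levelFinset n, ‖f v‖ ^ p

/-- `M_p(n,f)`, the `p`-th mean of `|f|` over level `n`. -/
noncomputable def Mp (p : ℝ) (f : T.V → ℂ) (n : ℕ) : ℝ := (T.Mpp p f n) ^ (1 / p)

/-- Membership in the Hardy space `H^p(T)`. -/
def MemHp (p : ℝ) (f : T.V → ℂ) : Prop := ∃ C : ℝ, ∀ n : ℕ, T.Mp p f n ≤ C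

/-- Membership in the little Hardy space `H^p_0(T)`. -/
def MemHp0 (p : ℝ) (f : T.V → ℂ) : Prop :=
  Filter.Tendsto (T.Mp p f) Filter.atTop (nhds 0)

/-- The `H^p` norm, `sup_n M_p(n,f)`. -/
noncomputable def Hnorm (p : ℝ) (f : T.V → ℂ) : ℝ := ⨆ n : ℕ, T.Mp p f n

/-- The forward shift `(Sf)(v) = f(parent v)`, `(Sf)(root) = 0`. -/
noncomputable def S (f : T.V → ℂ) : T.V → ℂ := fun v => if v = T.root then 0 else f (T.parent v)

/-- The backward shift `(Bf)(v) = Σ_{w child of v} f(w)`. -/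
noncomputable def B (f : T.V → ℂ) : T.V → ℂ := fun v => ∑ w ∈ T.childrenFinset v, f w

/-- An operator `A` is bounded on the subspace described by `Mem`, with the
`H^p` norm. -/
def BoundedOn (A : (T.V → ℂ) → (T.V → ℂ)) (Mem : (T.V → ℂ) → Prop) (p : ℝ) : Prop :=
  ∃ C : ℝ, 0 ≤ C ∧ ∀ f, Mem f → Mem (A f) ∧ T.Hnorm p (A f) ≤ C * T.Hnorm p f

/-- The operator norm of `A` on the subspace described by `Mem`. -/
noncomputable def opNorm (A : (T.V → ℂ) → (T.V → ℂ)) (Mem : (T.V → ℂ) → Prop) (p : ℝ) : ℝ :=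
  sInf {C : ℝ | 0 ≤ C ∧ ∀ f, Mem f → Mem (A f) ∧ T.Hnorm p (A f) ≤ C * T.Hnorm p f}

/-- Hypercyclicity of an operator `A` on the subspace described by `Mem`. -/
def Hypercyclic (A : (T.V → ℂ) → (T.V → ℂ)) (Mem : (T.V → ℂ) → Prop) (p : ℝ) : Prop :=
  ∃ f, Mem f ∧ ∀ g, Mem g → ∀ ε : ℝ, 0 < ε →
    ∃ N : ℕ, T.Hnorm p (fun v => A^[N] f v - g v) < ε

end HTree


namespace HTree

variable (T : HTree)

lemma mem_levelFinset {n : ℕ} {v : T.V} : v ∈ T.levelFinset n ↔ T.level v = n := by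
  simp [levelFinset]

lemma gamma_pos (n : ℕ) : 0 < T.gamma n := by
  obtain ⟨v, hv⟩ := T.nonempty_level n
  exact Finset.card_pos.2 ⟨v, T.mem_levelFinset.2 hv⟩

lemma gamma_pos' (n : ℕ) : (0:ℝ) < (T.gamma n : ℝ) := by exact_mod_cast T.gamma_pos n

lemma ne_root_of_level {v : T.V} {n : ℕ} (h : T.level v = n + 1) : v ≠ T.root := by
  intro hv; rw [hv, T.level_root] at h; omega

lemma parent_mem {n : ℕ} {v : T.V} (hv : v ∈ T.levelFinset (n+1)) :
    T.parent v ∈ T.levelFinset n := by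
  rw [T.mem_levelFinset] at hv ⊢
  have := T.level_parent v (T.ne_root_of_level hv)
  omega

lemma sum_S (p : ℝ) (f : T.V → ℂ) (n : ℕ) :
    ∑ v ∈ T.levelFinset (n+1), ‖T.S f v‖ ^ p
      = ∑ w ∈ T.levelFinset n, (T.numChildren w : ℝ) * ‖f w‖ ^ p := by
  rw [← Finset.sum_fiberwise_of_maps_to (fun v hv => T.parent_mem hv)
        (fun v => ‖T.S f v‖ ^ p)]
  refine Finset.sum_congr rfl fun w hw => ?_
  have hw' := T.mem_levelFinset.1 hw
  have h1 : ∀ v ∈ (T.levelFinset (n+1)).filter (fun v => T.parent v = w),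
      ‖T.S f v‖ ^ p = ‖f w‖ ^ p := by
    intro v hv
    rw [Finset.mem_filter] at hv
    have hvr := T.ne_root_of_level (T.mem_levelFinset.1 hv.1)
    rw [S, if_neg hvr, hv.2]
  have hcard : ((T.levelFinset (n+1)).filter (fun v => T.parent v = w)).card
      = T.numChildren w := by
    rw [numChildren, numNChildren, nChildrenFinset, hw']
    simp [Function.iterate_one]
    congr 1
  rw [Finset.sum_congr rfl h1, Finset.sum_const, nsmul_eq_mul, hcard]

lemma Mpp_nonneg (p : ℝ) (f : T.V → ℂ) (n : ℕ) : 0 ≤ T.Mpp p f n :=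
  mul_nonneg (by positivity)
    (Finset.sum_nonneg fun v _ => Real.rpow_nonneg (norm_nonneg _) p)

lemma Mp_nonneg (p : ℝ) (f : T.V → ℂ) (n : ℕ) : 0 ≤ T.Mp p f n :=
  Real.rpow_nonneg (T.Mpp_nonneg p f n) _

lemma Mp_S_zero (p : ℝ) (hp : p ≠ 0) (f : T.V → ℂ) : T.Mp p (T.S f) 0 = 0 := by
  have h : ∀ v ∈ T.levelFinset 0, ‖T.S f v‖ ^ p = 0 := by
    intro v hv
    have hr := T.root_of_level_zero v (T.mem_levelFinset.1 hv)
    simp [S, hr, Real.zero_rpow hp]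
  rw [Mp, Mpp, Finset.sum_eq_zero h, mul_zero, Real.zero_rpow (one_div_ne_zero hp)]

end HTree

/-- boundedness and norm of the forward shift on `H^p(T)`. -/
theorem forward_shift_bounded_Hp (T : HTree) (p : ℝ) (hp : 1 ≤ p) :
    (T.BoundedOn T.S (T.MemHp p) p ↔
      BddAbove (Set.range fun n : ℕ =>
        (T.K 1 n : ℝ) * (T.gamma n : ℝ) / (T.gamma (n + 1) : ℝ))) ∧
    (T.BoundedOn T.S (T.MemHp p) p →
      T.opNorm T.S (T.MemHp p) p =
        (⨆ n : ℕ, (T.K 1 n : ℝ) * (T.gamma n : ℝ) / (T.gamma (n + 1) : ℝ)) ^ (1 / p)) := by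
  have hp0 : (0:ℝ) < p := lt_of_lt_of_le one_pos hp
  have hpne : p ≠ 0 := ne_of_gt hp0
  have hip : (0:ℝ) < 1 / p := by positivity
  set c : ℕ → ℝ := fun n => (T.K 1 n : ℝ) * (T.gamma n : ℝ) / (T.gamma (n + 1) : ℝ) with hc
  have hc0 : ∀ n, 0 ≤ c n := fun n => by rw [hc]; positivity
  have hrev : BddAbove (Set.range c) →
      ∀ f, T.MemHp p f → T.MemHp p (T.S f) ∧
        T.Hnorm p (T.S f) ≤ (⨆ n, c n) ^ (1/p) * T.Hnorm p f := by
    intro hb f hf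
    set A := ⨆ n, c n with hA
    have hA0 : 0 ≤ A := le_trans (hc0 0) (le_ciSup hb 0)
    have hfb : BddAbove (Set.range (T.Mp p f)) := by
      obtain ⟨C, hC⟩ := hf; exact ⟨C, by rintro _ ⟨n, rfl⟩; exact hC n⟩
    have hHf0 : 0 ≤ T.Hnorm p f := le_trans (T.Mp_nonneg p f 0) (le_ciSup hfb 0)
    have key : ∀ n, T.Mp p (T.S f) n ≤ A ^ (1/p) * T.Hnorm p f := by
      intro n
      cases n with
      | zero =>
        rw [T.Mp_S_zero p hpne f]
        exact mul_nonneg (Real.rpow_nonneg hA0 _) hHf0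
      | succ n =>
        have h2 : ∑ w ∈ T.levelFinset n, (T.numChildren w : ℝ) * ‖f w‖ ^ p
            ≤ (T.K 1 n : ℝ) * ∑ w ∈ T.levelFinset n, ‖f w‖ ^ p := by
          rw [Finset.mul_sum]
          refine Finset.sum_le_sum fun w hw => ?_
          have hK : T.numChildren w ≤ T.K 1 n := Finset.le_sup hw
          exact mul_le_mul_of_nonneg_right (by exact_mod_cast hK)
            (Real.rpow_nonneg (norm_nonneg _) p)
        have hγ1 := T.gamma_pos' (n+1)
        have hγ := T.gamma_pos' n
        have h1 : T.Mpp p (T.S f) (n+1) ≤ c n * T.Mpp p f n := by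
          rw [HTree.Mpp, HTree.Mpp, T.sum_S p f n]
          calc (1 / (T.gamma (n+1) : ℝ)) * ∑ w ∈ T.levelFinset n, (T.numChildren w : ℝ) * ‖f w‖ ^ p
              ≤ (1 / (T.gamma (n+1) : ℝ)) * ((T.K 1 n : ℝ) * ∑ w ∈ T.levelFinset n, ‖f w‖ ^ p) :=
                mul_le_mul_of_nonneg_left h2 (by positivity)
            _ = c n * ((1 / (T.gamma n : ℝ)) * ∑ w ∈ T.levelFinset n, ‖f w‖ ^ p) := by
                rw [hc]; field_simp
        have h3 : c n ≤ A := le_ciSup hb n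
        have h4 : T.Mpp p (T.S f) (n+1) ≤ A * T.Mpp p f n :=
          le_trans h1 (mul_le_mul_of_nonneg_right h3 (T.Mpp_nonneg p f n))
        calc T.Mp p (T.S f) (n+1) ≤ (A * T.Mpp p f n) ^ (1/p) :=
              Real.rpow_le_rpow (T.Mpp_nonneg p _ _) h4 (le_of_lt hip)
          _ = A ^ (1/p) * T.Mp p f n := by
              rw [Real.mul_rpow hA0 (T.Mpp_nonneg p f n)]; rfl
          _ ≤ A ^ (1/p) * T.Hnorm p f :=
              mul_le_mul_of_nonneg_left (le_ciSup hfb n) (Real.rpow_nonneg hA0 _)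
    exact ⟨⟨_, key⟩, ciSup_le key⟩
  have hcancel : ∀ x : ℝ, 0 ≤ x → (x ^ (1/p)) ^ p = x := by
    intro x hx
    rw [← Real.rpow_mul hx, one_div, inv_mul_cancel₀ hpne, Real.rpow_one]
  have hfwd : ∀ C : ℝ, 0 ≤ C →
      (∀ f, T.MemHp p f → T.MemHp p (T.S f) ∧ T.Hnorm p (T.S f) ≤ C * T.Hnorm p f) →
      ∀ n, c n ≤ C ^ p := by
    intro C hC0 hC n
    obtain ⟨v₀, hv₀, hKv⟩ := Finset.exists_mem_eq_sup (T.levelFinset n)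
      ((T.nonempty_level n).elim fun v hv => ⟨v, T.mem_levelFinset.2 hv⟩)
      (fun v => T.numNChildren 1 v)
    have hlv₀ : T.level v₀ = n := T.mem_levelFinset.1 hv₀
    set F : T.V → ℂ := fun w => if w = v₀ then 1 else 0 with hF
    have hfm : ∀ m, m ≠ n → ∑ w ∈ T.levelFinset m, ‖F w‖ ^ p = 0 := by
      intro m hm
      refine Finset.sum_eq_zero fun w hw => ?_
      have hne : w ≠ v₀ := by
        intro h; subst h
        exact hm ((T.mem_levelFinset.1 hw).symm.trans hlv₀ |>.symm ▸ rfl)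
      simp [hF, hne, Real.zero_rpow hpne]
    have hfn : ∑ w ∈ T.levelFinset n, ‖F w‖ ^ p = 1 := by
      rw [Finset.sum_eq_single v₀
        (fun w _ hne => by simp [hF, hne, Real.zero_rpow hpne])
        (fun h => absurd hv₀ h)]
      simp [hF]
    have hMpF : ∀ m, T.Mp p F m ≤ (1 / (T.gamma n : ℝ)) ^ (1/p) := by
      intro m
      by_cases hm : m = n
      · subst hm; rw [HTree.Mp, HTree.Mpp, hfn, mul_one]
      · rw [HTree.Mp, HTree.Mpp, hfm m hm, mul_zero, Real.zero_rpow (one_div_ne_zero hpne)]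
        positivity
    obtain ⟨hSFmem, hSFle⟩ := hC F ⟨_, hMpF⟩
    have hHF : T.Hnorm p F ≤ (1 / (T.gamma n : ℝ)) ^ (1/p) := ciSup_le hMpF
    have hSFb : BddAbove (Set.range (T.Mp p (T.S F))) := by
      obtain ⟨D, hD⟩ := hSFmem; exact ⟨D, by rintro _ ⟨m, rfl⟩; exact hD m⟩
    have hKv' : (T.numChildren v₀ : ℝ) = (T.K 1 n : ℝ) := by
      rw [HTree.numChildren, HTree.K, hKv]
    have hMppSF : T.Mpp p (T.S F) (n+1) = (T.K 1 n : ℝ) / (T.gamma (n+1) : ℝ) := by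
      rw [HTree.Mpp, T.sum_S p F n]
      rw [Finset.sum_eq_single v₀
        (fun w _ hne => by simp [hF, hne, Real.zero_rpow hpne])
        (fun h => absurd hv₀ h)]
      have : ‖F v₀‖ ^ p = 1 := by simp [hF]
      rw [this, mul_one, hKv']
      ring
    have hle : ((T.K 1 n : ℝ) / (T.gamma (n+1) : ℝ)) ^ (1/p)
        ≤ C * (1 / (T.gamma n : ℝ)) ^ (1/p) := by
      calc ((T.K 1 n : ℝ) / (T.gamma (n+1) : ℝ)) ^ (1/p)
          = T.Mp p (T.S F) (n+1) := by rw [HTree.Mp, hMppSF]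
        _ ≤ T.Hnorm p (T.S F) := le_ciSup hSFb (n+1)
        _ ≤ C * T.Hnorm p F := hSFle
        _ ≤ C * (1 / (T.gamma n : ℝ)) ^ (1/p) := mul_le_mul_of_nonneg_left hHF hC0
    have hγ := T.gamma_pos' n
    have hγ1 := T.gamma_pos' (n+1)
    have h5 : (T.K 1 n : ℝ) / (T.gamma (n+1) : ℝ) ≤ C ^ p * (1 / (T.gamma n : ℝ)) := by
      have h6 := Real.rpow_le_rpow (Real.rpow_nonneg (by positivity) _) hle (le_of_lt hp0)
      rwa [hcancel _ (by positivity),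
        Real.mul_rpow hC0 (Real.rpow_nonneg (by positivity) _),
        hcancel _ (by positivity)] at h6
    have h6 : (T.K 1 n : ℝ) / (T.gamma (n+1) : ℝ) ≤ C ^ p / (T.gamma n : ℝ) := by
      rwa [mul_one_div] at h5
    rw [div_le_div_iff₀ hγ1 hγ] at h6
    rw [hc]
    simp only []
    rw [div_le_iff₀ hγ1]
    linarith [h6]
  constructor
  · constructor
    · rintro ⟨C, hC0, hC⟩
      exact ⟨C ^ p, by rintro _ ⟨n, rfl⟩; exact hfwd C hC0 hC n⟩
    · intro hb
      refine ⟨(⨆ n, c n) ^ (1/p), Real.rpow_nonneg ?_ _, hrev hb⟩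
      exact le_trans (hc0 0) (le_ciSup hb 0)
  · intro hbd
    have hb : BddAbove (Set.range c) := by
      obtain ⟨C, hC0, hC⟩ := hbd
      exact ⟨C ^ p, by rintro _ ⟨n, rfl⟩; exact hfwd C hC0 hC n⟩
    have hA0 : 0 ≤ ⨆ n, c n := le_trans (hc0 0) (le_ciSup hb 0)
    apply le_antisymm
    · exact csInf_le ⟨0, fun C hC => hC.1⟩ ⟨Real.rpow_nonneg hA0 _, hrev hb⟩
    · refine le_csInf ⟨_, ⟨Real.rpow_nonneg hA0 _, hrev hb⟩⟩ ?_
      rintro C ⟨hC0, hC⟩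
      have h7 : (⨆ n, c n) ≤ C ^ p := ciSup_le fun n => hfwd C hC0 hC n
      calc (⨆ n, c n) ^ (1/p) ≤ (C ^ p) ^ (1/p) :=
            Real.rpow_le_rpow hA0 h7 (le_of_lt hip)
        _ = C := by
            rw [← Real.rpow_mul hC0, mul_one_div, div_self hpne, Real.rpow_one]
end

section
/- The forward shift S is bounded on the little Hardy space H^p_0(T) if and only if the set {K(1,n-1)·γ(n-1)/γ(n) : n ∈ ℕ} is bounded, and in that case ‖S‖ = (sup_n K(1,n-1)·γ(n-1)/γ(n))^{1/p}. -/
open scoped BigOperators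
open Classical

section Aux

open HTree

variable (T : HTree)

lemma HT.mem_levelFinset {n : ℕ} {v : T.V} : v ∈ T.levelFinset n ↔ T.level v = n := by
  simp [HTree.levelFinset]

lemma HT.gamma_pos (n : ℕ) : (0 : ℝ) < (T.gamma n : ℝ) := by
  obtain ⟨v, hv⟩ := T.nonempty_level n
  have : v ∈ T.levelFinset n := (HT.mem_levelFinset T).2 hv
  exact_mod_cast Finset.card_pos.2 ⟨v, this⟩

lemma HT.sum_parent (n : ℕ) (g : T.V → ℝ) :
    ∑ w ∈ T.levelFinset (n + 1), g (T.parent w)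
      = ∑ v ∈ T.levelFinset n, (T.numChildren v : ℝ) * g v := by
  have hm : ∀ w ∈ T.levelFinset (n + 1), T.parent w ∈ T.levelFinset n := by
    intro w hw
    have hw' : T.level w = n + 1 := (HT.mem_levelFinset T).1 hw
    have hwr : w ≠ T.root := by
      intro h; rw [h, T.level_root] at hw'; omega
    have := T.level_parent w hwr
    rw [HT.mem_levelFinset]; omega
  rw [← Finset.sum_fiberwise_of_maps_to hm (fun w => g (T.parent w))]
  refine Finset.sum_congr rfl fun v hv => ?_
  have hlv : T.level v = n := (HT.mem_levelFinset T).1 hv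
  have hset : (T.levelFinset (n + 1)).filter (fun w => T.parent w = v)
      = T.nChildrenFinset 1 v := by
    simp [HTree.nChildrenFinset, hlv, Function.iterate_one]
  calc ∑ w ∈ (T.levelFinset (n + 1)).filter (fun w => T.parent w = v), g (T.parent w)
      = ∑ _w ∈ (T.levelFinset (n + 1)).filter (fun w => T.parent w = v), g v := by
        refine Finset.sum_congr rfl fun w hw => ?_
        rw [(Finset.mem_filter.1 hw).2]
    _ = (T.numChildren v : ℝ) * g v := by
        rw [Finset.sum_const, hset]
        simp [HTree.numChildren, HTree.numNChildren, nsmul_eq_mul]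

lemma HT.Mpp_nonneg (p : ℝ) (f : T.V → ℂ) (n : ℕ) : 0 ≤ T.Mpp p f n := by
  unfold HTree.Mpp
  have : ∀ v ∈ T.levelFinset n, (0:ℝ) ≤ ‖f v‖ ^ p :=
    fun v _ => Real.rpow_nonneg (norm_nonneg _) p
  positivity

lemma HT.Mp_nonneg (p : ℝ) (f : T.V → ℂ) (n : ℕ) : 0 ≤ T.Mp p f n :=
  Real.rpow_nonneg (HT.Mpp_nonneg T p f n) _

lemma HT.Mpp_S_succ (p : ℝ) (f : T.V → ℂ) (n : ℕ) :
    T.Mpp p (T.S f) (n + 1)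
      = (1 / (T.gamma (n + 1) : ℝ)) *
          ∑ v ∈ T.levelFinset n, (T.numChildren v : ℝ) * ‖f v‖ ^ p := by
  unfold HTree.Mpp
  congr 1
  rw [← HT.sum_parent T n (fun v => ‖f v‖ ^ p)]
  refine Finset.sum_congr rfl fun w hw => ?_
  have hw' : T.level w = n + 1 := (HT.mem_levelFinset T).1 hw
  have hwr : w ≠ T.root := by
    intro h; rw [h, T.level_root] at hw'; omega
  simp [HTree.S, hwr]

lemma HT.Mp_S_zero (p : ℝ) (hp : 0 < p) (f : T.V → ℂ) : T.Mp p (T.S f) 0 = 0 := by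
  have hL0 : T.levelFinset 0 = {T.root} := by
    ext w
    rw [HT.mem_levelFinset]
    constructor
    · intro h; rw [Finset.mem_singleton]; exact T.root_of_level_zero w h
    · rintro h; rw [Finset.mem_singleton] at h; rw [h]; exact T.level_root
  have h1p : (1 / p) ≠ 0 := by positivity
  rw [HTree.Mp, HTree.Mpp, hL0, Finset.sum_singleton]
  have h0 : T.S f T.root = 0 := by simp [HTree.S]
  rw [h0, norm_zero, Real.zero_rpow hp.ne', mul_zero, Real.zero_rpow h1p]

/-- the characteristic function of a single vertex -/
noncomputable def HT.chi (v : T.V) : T.V → ℂ := fun w => if w = v then 1 else 0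

lemma HT.sum_chi (p : ℝ) (hp : 0 < p) (v : T.V) (m : ℕ) :
    ∑ w ∈ T.levelFinset m, ‖HT.chi T v w‖ ^ p
      = if v ∈ T.levelFinset m then 1 else 0 := by
  have h : ∀ w, ‖HT.chi T v w‖ ^ p = if w = v then (1:ℝ) else 0 := by
    intro w; by_cases h : w = v <;> simp [HT.chi, h, Real.zero_rpow hp.ne']
  rw [Finset.sum_congr rfl (fun w _ => h w)]
  exact Finset.sum_ite_eq' _ _ _

lemma HT.Mp_chi_ne (p : ℝ) (hp : 0 < p) (v : T.V) (m : ℕ) (hm : T.level v ≠ m) :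
    T.Mp p (HT.chi T v) m = 0 := by
  have h1p : (1 / p) ≠ 0 := by positivity
  have hv : v ∉ T.levelFinset m := fun h => hm ((HT.mem_levelFinset T).1 h)
  rw [HTree.Mp, HTree.Mpp, HT.sum_chi T p hp, if_neg hv, mul_zero, Real.zero_rpow h1p]

lemma HT.Mp_chi_eq (p : ℝ) (hp : 0 < p) (v : T.V) :
    T.Mp p (HT.chi T v) (T.level v) = (1 / (T.gamma (T.level v) : ℝ)) ^ (1 / p) := by
  have hv : v ∈ T.levelFinset (T.level v) := (HT.mem_levelFinset T).2 rfl
  rw [HTree.Mp, HTree.Mpp, HT.sum_chi T p hp, if_pos hv, mul_one]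

lemma HT.Mpp_S_chi (p : ℝ) (hp : 0 < p) (v : T.V) :
    T.Mpp p (T.S (HT.chi T v)) (T.level v + 1)
      = (T.numChildren v : ℝ) / (T.gamma (T.level v + 1) : ℝ) := by
  rw [HT.Mpp_S_succ]
  have h : ∀ u, (T.numChildren u : ℝ) * ‖HT.chi T v u‖ ^ p
      = if u = v then (T.numChildren u : ℝ) else 0 := by
    intro u; by_cases h : u = v <;> simp [HT.chi, h, Real.zero_rpow hp.ne']
  rw [Finset.sum_congr rfl (fun u _ => h u), Finset.sum_ite_eq' _ _ _,
    if_pos ((HT.mem_levelFinset T).2 rfl)]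
  ring

/-- forward direction: the sup bound gives boundedness with constant `L^(1/p)`. -/
lemma HT.forward (p : ℝ) (hp : 1 ≤ p)
    (hb : BddAbove (Set.range fun n : ℕ =>
      (T.K 1 n : ℝ) * (T.gamma n : ℝ) / (T.gamma (n + 1) : ℝ)))
    (f : T.V → ℂ) (hf : T.MemHp0 p f) :
    T.MemHp0 p (T.S f) ∧
      T.Hnorm p (T.S f) ≤
        ((⨆ n : ℕ, (T.K 1 n : ℝ) * (T.gamma n : ℝ) / (T.gamma (n + 1) : ℝ)) ^ (1 / p)) *
          T.Hnorm p f := by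
  have hp0 : 0 < p := lt_of_lt_of_le one_pos hp
  set c : ℕ → ℝ := fun n => (T.K 1 n : ℝ) * (T.gamma n : ℝ) / (T.gamma (n + 1) : ℝ) with hc
  set L : ℝ := ⨆ n : ℕ, c n with hLdef
  have hc0 : ∀ n, 0 ≤ c n := fun n => by
    apply div_nonneg (mul_nonneg (Nat.cast_nonneg _) (Nat.cast_nonneg _)) (Nat.cast_nonneg _)
  have hL0 : 0 ≤ L := le_trans (hc0 0) (le_ciSup hb 0)
  have key : ∀ n, T.Mpp p (T.S f) (n + 1) ≤ L * T.Mpp p f n := by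
    intro n
    rw [HT.Mpp_S_succ]
    have hγ := HT.gamma_pos T n
    have hγ' := HT.gamma_pos T (n + 1)
    have step1 : ∑ v ∈ T.levelFinset n, (T.numChildren v : ℝ) * ‖f v‖ ^ p
        ≤ ∑ v ∈ T.levelFinset n, (T.K 1 n : ℝ) * ‖f v‖ ^ p := by
      refine Finset.sum_le_sum fun v hv => ?_
      have hK : T.numChildren v ≤ T.K 1 n := Finset.le_sup hv
      exact mul_le_mul_of_nonneg_right (by exact_mod_cast hK)
        (Real.rpow_nonneg (norm_nonneg _) p)
    calc (1 / (T.gamma (n + 1) : ℝ)) *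
          ∑ v ∈ T.levelFinset n, (T.numChildren v : ℝ) * ‖f v‖ ^ p
        ≤ (1 / (T.gamma (n + 1) : ℝ)) *
          ∑ v ∈ T.levelFinset n, (T.K 1 n : ℝ) * ‖f v‖ ^ p :=
          mul_le_mul_of_nonneg_left step1 (by positivity)
      _ = c n * T.Mpp p f n := by
          rw [← Finset.mul_sum, HTree.Mpp, hc]
          field_simp
      _ ≤ L * T.Mpp p f n :=
          mul_le_mul_of_nonneg_right (le_ciSup hb n) (HT.Mpp_nonneg T p f n)
  have keyMp : ∀ n, T.Mp p (T.S f) (n + 1) ≤ L ^ (1 / p) * T.Mp p f n := by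
    intro n
    have h1 : T.Mpp p (T.S f) (n + 1) ^ (1 / p) ≤ (L * T.Mpp p f n) ^ (1 / p) :=
      Real.rpow_le_rpow (HT.Mpp_nonneg T p _ _) (key n) (by positivity)
    rwa [Real.mul_rpow hL0 (HT.Mpp_nonneg T p f n)] at h1
  have hS0 : T.MemHp0 p (T.S f) := by
    unfold HTree.MemHp0 at hf ⊢
    rw [← Filter.tendsto_add_atTop_iff_nat 1]
    refine squeeze_zero (fun n => HT.Mp_nonneg T p _ _) keyMp ?_
    simpa using hf.const_mul (L ^ (1 / p))
  refine ⟨hS0, ?_⟩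
  have hbf : BddAbove (Set.range (T.Mp p f)) := hf.bddAbove_range
  have hHf0 : 0 ≤ T.Hnorm p f :=
    le_trans (HT.Mp_nonneg T p f 0) (le_ciSup hbf 0)
  refine ciSup_le fun n => ?_
  cases n with
  | zero =>
      rw [HT.Mp_S_zero T p hp0]
      exact mul_nonneg (Real.rpow_nonneg hL0 _) hHf0
  | succ n =>
      refine le_trans (keyMp n) ?_
      exact mul_le_mul_of_nonneg_left (le_ciSup hbf n) (Real.rpow_nonneg hL0 _)

/-- backward direction: any bound `C` dominates each ratio. -/
lemma HT.backward (p : ℝ) (hp : 1 ≤ p) (C : ℝ) (hC0 : 0 ≤ C)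
    (hC : ∀ f, T.MemHp0 p f → T.MemHp0 p (T.S f) ∧ T.Hnorm p (T.S f) ≤ C * T.Hnorm p f)
    (n : ℕ) : (T.K 1 n : ℝ) * (T.gamma n : ℝ) / (T.gamma (n + 1) : ℝ) ≤ C ^ p := by
  have hp0 : 0 < p := lt_of_lt_of_le one_pos hp
  have hγ := HT.gamma_pos T n
  have hγ' := HT.gamma_pos T (n + 1)
  obtain ⟨v, hv, hKv⟩ := Finset.exists_mem_eq_sup (T.levelFinset n)
    (by
      obtain ⟨w, hw⟩ := T.nonempty_level n
      exact ⟨w, (HT.mem_levelFinset T).2 hw⟩)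
    (fun v => T.numNChildren 1 v)
  have hlv : T.level v = n := (HT.mem_levelFinset T).1 hv
  set f : T.V → ℂ := HT.chi T v with hfdef
  have hmem : T.MemHp0 p f := by
    unfold HTree.MemHp0
    refine Filter.Tendsto.congr' ?_ tendsto_const_nhds
    filter_upwards [Filter.eventually_ge_atTop (n + 1)] with m hm
    exact (HT.Mp_chi_ne T p hp0 v m (by omega)).symm
  obtain ⟨hS0, hSle⟩ := hC f hmem
  have hbS : BddAbove (Set.range (T.Mp p (T.S f))) := hS0.bddAbove_range
  -- norm of f
  have hHf : T.Hnorm p f ≤ (1 / (T.gamma n : ℝ)) ^ (1 / p) := by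
    refine ciSup_le fun m => ?_
    by_cases hm : T.level v = m
    · rw [← hm, HT.Mp_chi_eq T p hp0, hlv]
    · rw [HT.Mp_chi_ne T p hp0 v m hm]
      positivity
  -- lower bound on the norm of S f
  have hlow : ((T.K 1 n : ℝ) / (T.gamma (n + 1) : ℝ)) ^ (1 / p) ≤ T.Hnorm p (T.S f) := by
    have := le_ciSup hbS (n + 1)
    have heq : T.Mp p (T.S f) (n + 1) = ((T.K 1 n : ℝ) / (T.gamma (n + 1) : ℝ)) ^ (1 / p) := by
      rw [HTree.Mp]
      have := HT.Mpp_S_chi T p hp0 v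
      rw [hlv] at this
      rw [this]
      congr 2
      rw [HTree.K, hKv]
      rfl
    rw [← heq]
    exact le_ciSup hbS (n + 1)
  have hmain : ((T.K 1 n : ℝ) / (T.gamma (n + 1) : ℝ)) ^ (1 / p)
      ≤ C * (1 / (T.gamma n : ℝ)) ^ (1 / p) := by
    refine le_trans hlow (le_trans hSle ?_)
    exact mul_le_mul_of_nonneg_left hHf hC0
  -- raise both sides to the power p
  have hKγ : (0:ℝ) ≤ (T.K 1 n : ℝ) / (T.gamma (n + 1) : ℝ) := by positivity
  have h2 : (T.K 1 n : ℝ) / (T.gamma (n + 1) : ℝ) ≤ C ^ p * (1 / (T.gamma n : ℝ)) := by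
    have h3 := Real.rpow_le_rpow (Real.rpow_nonneg hKγ _) hmain hp0.le
    rw [← Real.rpow_mul hKγ, one_div_mul_cancel hp0.ne', Real.rpow_one,
      Real.mul_rpow hC0 (Real.rpow_nonneg (by positivity) _),
      ← Real.rpow_mul (by positivity : (0:ℝ) ≤ 1 / (T.gamma n : ℝ)),
      one_div_mul_cancel hp0.ne', Real.rpow_one] at h3
    exact h3
  calc (T.K 1 n : ℝ) * (T.gamma n : ℝ) / (T.gamma (n + 1) : ℝ)
      = ((T.K 1 n : ℝ) / (T.gamma (n + 1) : ℝ)) * (T.gamma n : ℝ) := by ring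
    _ ≤ (C ^ p * (1 / (T.gamma n : ℝ))) * (T.gamma n : ℝ) :=
        mul_le_mul_of_nonneg_right h2 hγ.le
    _ = C ^ p := by field_simp

end Aux

/-- boundedness and norm of the forward shift on `H^p_0(T)`. -/
theorem forward_shift_bounded_Hp0 (T : HTree) (p : ℝ) (hp : 1 ≤ p) :
    (T.BoundedOn T.S (T.MemHp0 p) p ↔
      BddAbove (Set.range fun n : ℕ =>
        (T.K 1 n : ℝ) * (T.gamma n : ℝ) / (T.gamma (n + 1) : ℝ))) ∧
    (T.BoundedOn T.S (T.MemHp0 p) p →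
      T.opNorm T.S (T.MemHp0 p) p =
        (⨆ n : ℕ, (T.K 1 n : ℝ) * (T.gamma n : ℝ) / (T.gamma (n + 1) : ℝ)) ^ (1 / p)) := by
  have hp0 : 0 < p := lt_of_lt_of_le one_pos hp
  set c : ℕ → ℝ := fun n => (T.K 1 n : ℝ) * (T.gamma n : ℝ) / (T.gamma (n + 1) : ℝ) with hc
  have hc0 : ∀ n, 0 ≤ c n := fun n =>
    div_nonneg (mul_nonneg (Nat.cast_nonneg _) (Nat.cast_nonneg _)) (Nat.cast_nonneg _)
  have hBddOf : T.BoundedOn T.S (T.MemHp0 p) p → BddAbove (Set.range c) := by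
    rintro ⟨C, hC0, hC⟩
    exact ⟨C ^ p, by rintro x ⟨n, rfl⟩; exact HT.backward T p hp C hC0 hC n⟩
  have hOfBdd : BddAbove (Set.range c) → T.BoundedOn T.S (T.MemHp0 p) p := by
    intro hb
    have hL0 : 0 ≤ ⨆ n, c n := le_trans (hc0 0) (le_ciSup hb 0)
    exact ⟨(⨆ n, c n) ^ (1 / p), Real.rpow_nonneg hL0 _, fun f hf => HT.forward T p hp hb f hf⟩
  refine ⟨⟨hBddOf, hOfBdd⟩, ?_⟩
  intro hbound
  have hb : BddAbove (Set.range c) := hBddOf hbound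
  have hL0 : 0 ≤ ⨆ n, c n := le_trans (hc0 0) (le_ciSup hb 0)
  set L : ℝ := ⨆ n, c n with hLdef
  have hmem : L ^ (1 / p) ∈ {C : ℝ | 0 ≤ C ∧ ∀ f, T.MemHp0 p f →
      T.MemHp0 p (T.S f) ∧ T.Hnorm p (T.S f) ≤ C * T.Hnorm p f} :=
    ⟨Real.rpow_nonneg hL0 _, fun f hf => HT.forward T p hp hb f hf⟩
  have hlowbd : ∀ C ∈ {C : ℝ | 0 ≤ C ∧ ∀ f, T.MemHp0 p f →
      T.MemHp0 p (T.S f) ∧ T.Hnorm p (T.S f) ≤ C * T.Hnorm p f}, L ^ (1 / p) ≤ C := by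
    rintro C ⟨hC0, hC⟩
    have hLC : L ≤ C ^ p := ciSup_le fun n => HT.backward T p hp C hC0 hC n
    calc L ^ (1 / p) ≤ (C ^ p) ^ (1 / p) :=
          Real.rpow_le_rpow hL0 hLC (by positivity)
      _ = C := by
          rw [← Real.rpow_mul hC0, mul_one_div_cancel hp0.ne', Real.rpow_one]
  exact le_antisymm (csInf_le ⟨L ^ (1 / p), hlowbd⟩ hmem) (le_csInf ⟨_, hmem⟩ hlowbd)
end

section
/- If the forward shift S is an isometry on H^p(T), then there exists a sequence (s_n) of natural numbers such that every vertex w has exactly s_{|w|+1} children; explicitly, γ(1,w) = γ(|w|+1)/γ(|w|) for every vertex w. -/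
open scoped BigOperators
open Classical

lemma aux_mem_levelFinset (T : HTree) (n : ℕ) (v : T.V) :
    v ∈ T.levelFinset n ↔ T.level v = n := by
  simp [HTree.levelFinset, Set.Finite.mem_toFinset]

lemma aux_gamma_pos (T : HTree) (n : ℕ) : 0 < T.gamma n := by
  obtain ⟨v, hv⟩ := T.nonempty_level n
  exact Finset.card_pos.mpr ⟨v, (aux_mem_levelFinset T n v).mpr hv⟩

lemma aux_iSup_single (h : ℕ → ℝ) (m : ℕ) (a : ℝ) (ha : 0 ≤ a)
    (hh : ∀ n, h n = if n = m then a else 0) : (⨆ n, h n) = a := by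
  have hb : ∀ n, h n ≤ a := fun n => by rw [hh n]; split <;> simp [ha]
  refine le_antisymm (ciSup_le hb) ?_
  have hB : BddAbove (Set.range h) := ⟨a, by rintro _ ⟨n, rfl⟩; exact hb n⟩
  have := le_ciSup hB m
  rwa [hh m, if_pos rfl] at this

/-- if the forward shift is an isometry on `H^p(T)`, then the number of
children only depends on the level; explicitly `γ(1,w)·γ(|w|) = γ(|w|+1)`. -/
theorem level_regular_of_forward_shift_isometry (T : HTree) (p : ℝ) (hp : 1 ≤ p)
    (hiso : ∀ f : T.V → ℂ, T.MemHp p f →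
      T.MemHp p (T.S f) ∧ T.Hnorm p (T.S f) = T.Hnorm p f) :
    ∃ s : ℕ → ℕ, ∀ w : T.V,
      T.numChildren w = s (T.level w + 1) ∧
      T.numChildren w * T.gamma (T.level w) = T.gamma (T.level w + 1) := by
  classical
  have hp0 : p ≠ 0 := by linarith
  have hip : (1 : ℝ) / p ≠ 0 := one_div_ne_zero hp0
  have hip' : p⁻¹ ≠ 0 := inv_ne_zero hp0
  refine ⟨fun n => T.gamma n / T.gamma (n - 1), fun w => ?_⟩
  set r := T.level w with hr
  set f : T.V → ℂ := fun v => if v = w then 1 else 0 with hf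
  have hkey : ∀ v, ‖f v‖ ^ p = if v = w then (1:ℝ) else 0 := by
    intro v
    by_cases h : v = w
    · simp [hf, h]
    · simp [hf, h, Real.zero_rpow hp0]
  have hsum : ∀ n, ∑ v ∈ T.levelFinset n, ‖f v‖ ^ p
      = if n = r then (1:ℝ) else 0 := by
    intro n
    simp_rw [hkey]
    rw [Finset.sum_ite_eq' (T.levelFinset n) w (fun _ => (1:ℝ))]
    simp only [aux_mem_levelFinset]
    by_cases h : n = r
    · simp [h, hr]
    · rw [if_neg (by omega : ¬ T.level w = n), if_neg h]
  have hMpp : ∀ n, T.Mpp p f n = if n = r then 1 / (T.gamma r : ℝ) else 0 := by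
    intro n
    rw [HTree.Mpp, hsum n]
    by_cases h : n = r <;> simp [h]
  have hMp : ∀ n, T.Mp p f n
      = if n = r then (1 / (T.gamma r : ℝ)) ^ ((1:ℝ)/p) else 0 := by
    intro n
    rw [HTree.Mp, hMpp n]
    by_cases h : n = r
    · simp [h]
    · simp [h, Real.zero_rpow hip, Real.zero_rpow hip']
  have hga : (0:ℝ) < T.gamma r := by exact_mod_cast aux_gamma_pos T r
  have hgb : (0:ℝ) < T.gamma (r+1) := by exact_mod_cast aux_gamma_pos T (r+1)
  have ha0 : 0 ≤ (1 / (T.gamma r : ℝ)) ^ ((1:ℝ)/p) :=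
    Real.rpow_nonneg (by positivity) _
  have hHf : T.Hnorm p f = (1 / (T.gamma r : ℝ)) ^ ((1:ℝ)/p) :=
    aux_iSup_single _ r _ ha0 hMp
  have hmemf : T.MemHp p f := by
    refine ⟨(1 / (T.gamma r : ℝ)) ^ ((1:ℝ)/p), fun n => ?_⟩
    rw [hMp n]
    split
    · exact le_rfl
    · exact ha0
  -- now compute for S f
  have hroot_not : ∀ n v, v ∈ T.levelFinset n → n ≠ 0 → v ≠ T.root := by
    intro n v hv hn hve
    rw [aux_mem_levelFinset] at hv
    rw [hve, T.level_root] at hv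
    exact hn hv.symm
  have hSsum : ∀ n, ∑ v ∈ T.levelFinset n, ‖T.S f v‖ ^ p
      = if n = r + 1 then (T.numChildren w : ℝ) else 0 := by
    intro n
    by_cases h : n = r + 1
    · subst h
      rw [if_pos rfl]
      have : ∀ v ∈ T.levelFinset (r+1), ‖T.S f v‖ ^ p
          = if T.parent v = w then (1:ℝ) else 0 := by
        intro v hv
        have hvr : v ≠ T.root := hroot_not _ _ hv (by omega)
        rw [HTree.S, if_neg hvr]
        by_cases hpw : T.parent v = w
        · simp [hf, hpw]
        · simp [hf, hpw, Real.zero_rpow hp0]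
      rw [Finset.sum_congr rfl this, Finset.sum_boole]
      congr 1
    · rw [if_neg h]
      apply Finset.sum_eq_zero
      intro v hv
      by_cases hvr : v = T.root
      · simp [HTree.S, hvr, Real.zero_rpow hp0]
      · rw [HTree.S, if_neg hvr]
        have hlv : T.level (T.parent v) + 1 = T.level v := T.level_parent v hvr
        rw [aux_mem_levelFinset] at hv
        have hpw : T.parent v ≠ w := by
          intro hpw
          rw [hpw, ← hr] at hlv
          omega
        simp [hf, hpw, Real.zero_rpow hp0]
  have hMppS : ∀ n, T.Mpp p (T.S f) n
      = if n = r + 1 then (T.numChildren w : ℝ) / (T.gamma (r+1) : ℝ) else 0 := by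
    intro n
    rw [HTree.Mpp, hSsum n]
    by_cases h : n = r + 1
    · subst h; rw [if_pos rfl, if_pos rfl]; ring
    · simp [h]
  have hb0 : 0 ≤ ((T.numChildren w : ℝ) / (T.gamma (r+1) : ℝ)) ^ ((1:ℝ)/p) :=
    Real.rpow_nonneg (by positivity) _
  have hMpS : ∀ n, T.Mp p (T.S f) n
      = if n = r + 1 then
          ((T.numChildren w : ℝ) / (T.gamma (r+1) : ℝ)) ^ ((1:ℝ)/p) else 0 := by
    intro n
    rw [HTree.Mp, hMppS n]
    by_cases h : n = r + 1
    · simp [h]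
    · simp [h, Real.zero_rpow hip, Real.zero_rpow hip']
  have hHSf : T.Hnorm p (T.S f)
      = ((T.numChildren w : ℝ) / (T.gamma (r+1) : ℝ)) ^ ((1:ℝ)/p) :=
    aux_iSup_single _ (r+1) _ hb0 hMpS
  have heq := (hiso f hmemf).2
  rw [hHSf, hHf] at heq
  have hc : (T.numChildren w : ℝ) / (T.gamma (r+1) : ℝ) = 1 / (T.gamma r : ℝ) := by
    have h1 := congrArg (fun x : ℝ => x ^ p) heq
    rwa [← Real.rpow_mul (by positivity), ← Real.rpow_mul (by positivity),
      one_div_mul_cancel hp0, Real.rpow_one, Real.rpow_one] at h1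
  rw [div_eq_div_iff hgb.ne' hga.ne'] at hc
  have hnat : T.numChildren w * T.gamma r = T.gamma (r + 1) := by
    have : (T.numChildren w : ℝ) * (T.gamma r : ℝ) = (T.gamma (r+1) : ℝ) := by
      linarith
    exact_mod_cast this
  refine ⟨?_, hnat⟩
  show T.numChildren w = T.gamma (r + 1) / T.gamma (r + 1 - 1)
  rw [← hnat, Nat.add_sub_cancel, Nat.mul_div_cancel _ (aux_gamma_pos T r)]
end

section
/- If the tree T has a leaf, the point spectrum of the forward shift S equals {0}; if T is leafless, S has no eigenvalues (as an operator on H^p(T) or H^p_0(T)). -/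
open scoped BigOperators
open Classical

private lemma eig_nonzero_zero (T : HTree) {z : ℂ} (hz : z ≠ 0) {f : T.V → ℂ}
    (hf : T.S f = fun v => z * f v) : f = 0 := by
  have key : ∀ n : ℕ, ∀ v : T.V, T.level v = n → f v = 0 := by
    intro n
    induction n with
    | zero =>
      intro v hv
      have hvr : v = T.root := T.root_of_level_zero v hv
      rw [hvr]
      have h := congrFun hf T.root
      simp [HTree.S] at h
      exact h.resolve_left hz
    | succ n ih =>
      intro v hv
      have hvr : v ≠ T.root := by
        intro hcon
        rw [hcon, T.level_root] at hv
        exact Nat.succ_ne_zero n hv.symm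
      have hlp := T.level_parent v hvr
      have h := congrFun hf v
      simp [HTree.S, hvr] at h
      have h0 : f (T.parent v) = 0 := ih _ (by omega)
      rw [h0] at h
      rcases mul_eq_zero.mp h.symm with h' | h'
      · exact absurd h' hz
      · exact h'
  funext v
  exact key _ v rfl

private lemma indicator_parent_ne (T : HTree) {w : T.V} (hw : T.numChildren w = 0)
    {v : T.V} (hv : v ≠ T.root) : T.parent v ≠ w := by
  intro h
  have hmem : v ∈ T.nChildrenFinset 1 w := by
    rw [HTree.nChildrenFinset, Finset.mem_filter]
    constructor
    · apply (T.finite_level _).mem_toFinset.mpr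
      have := T.level_parent v hv
      rw [h] at this
      simpa using this.symm
    · simpa using h
  have hcard : (T.nChildrenFinset 1 w).card = 0 := hw
  rw [Finset.card_eq_zero] at hcard
  rw [hcard] at hmem
  exact absurd hmem (Finset.notMem_empty v)

private lemma child_exists (T : HTree) (v : T.V) (hv : T.numChildren v ≠ 0) :
    ∃ u : T.V, u ≠ T.root ∧ T.parent u = v := by
  have hne : (T.nChildrenFinset 1 v).Nonempty := by
    rw [← Finset.card_pos]
    exact Nat.pos_of_ne_zero hv
  obtain ⟨u, hu⟩ := hne
  rw [HTree.nChildrenFinset, Finset.mem_filter] at hu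
  obtain ⟨hu1, hu2⟩ := hu
  have hlev : T.level u = T.level v + 1 := (T.finite_level _).mem_toFinset.mp hu1
  refine ⟨u, ?_, by simpa using hu2⟩
  intro hcon
  rw [hcon, T.level_root] at hlev
  exact Nat.succ_ne_zero _ hlev.symm

private lemma mpp_indicator_ne (T : HTree) (p : ℝ) (hp : 1 ≤ p) (w : T.V) {n : ℕ}
    (hn : n ≠ T.level w) :
    T.Mpp p (fun v => if v = w then (1:ℂ) else 0) n = 0 := by
  rw [HTree.Mpp]
  have hz : ∀ v ∈ T.levelFinset n, ‖(if v = w then (1:ℂ) else 0)‖ ^ p = 0 := by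
    intro v hv
    have hvw : v ≠ w := by
      intro h
      subst h
      exact hn ((T.finite_level n).mem_toFinset.mp hv).symm
    simp [hvw, Real.zero_rpow (by linarith : p ≠ 0)]
  rw [Finset.sum_eq_zero hz, mul_zero]

private lemma mp_indicator_le_one (T : HTree) (p : ℝ) (hp : 1 ≤ p) (w : T.V) (n : ℕ) :
    T.Mp p (fun v => if v = w then (1:ℂ) else 0) n ≤ 1 := by
  have hp0 : (0:ℝ) < p := by linarith
  have hMpp0 : 0 ≤ T.Mpp p (fun v => if v = w then (1:ℂ) else 0) n := by
    rw [HTree.Mpp]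
    apply mul_nonneg (by positivity)
    apply Finset.sum_nonneg
    intro v _
    exact Real.rpow_nonneg (norm_nonneg _) p
  have hMpp1 : T.Mpp p (fun v => if v = w then (1:ℂ) else 0) n ≤ 1 := by
    rw [HTree.Mpp]
    have hsum : ∑ v ∈ T.levelFinset n, ‖(if v = w then (1:ℂ) else 0)‖ ^ p
        ≤ (T.gamma n : ℝ) := by
      rw [HTree.gamma]
      calc ∑ v ∈ T.levelFinset n, ‖(if v = w then (1:ℂ) else 0)‖ ^ p
          ≤ ∑ _v ∈ T.levelFinset n, (1:ℝ) := by
            apply Finset.sum_le_sum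
            intro v _
            by_cases hvw : v = w
            · simp [hvw]
            · simp [hvw, Real.zero_rpow hp0.ne']
        _ = ((T.levelFinset n).card : ℝ) := by simp
    have hγ : (0:ℝ) < (T.gamma n : ℝ) := by
      have : 0 < T.gamma n := by
        rw [HTree.gamma, Finset.card_pos, HTree.levelFinset,
          Set.Finite.toFinset_nonempty]
        exact T.nonempty_level n
      exact_mod_cast this
    rw [div_mul_eq_mul_div, one_mul, div_le_one hγ]
    exact hsum
  rw [HTree.Mp]
  exact Real.rpow_le_one hMpp0 hMpp1 (by positivity)

private lemma mp_indicator_eq_zero (T : HTree) (p : ℝ) (hp : 1 ≤ p) (w : T.V) {n : ℕ}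
    (hn : n ≠ T.level w) :
    T.Mp p (fun v => if v = w then (1:ℂ) else 0) n = 0 := by
  rw [HTree.Mp, mpp_indicator_ne T p hp w hn]
  exact Real.zero_rpow (by positivity)

private lemma zero_mem_of_leaf (T : HTree) (p : ℝ) (hp : 1 ≤ p) {w : T.V}
    (hw : T.numChildren w = 0) :
    ∃ f, (T.MemHp p f ∧ T.MemHp0 p f) ∧ f ≠ 0 ∧ T.S f = fun v => (0:ℂ) * f v := by
  refine ⟨fun v => if v = w then (1:ℂ) else 0, ⟨⟨1, fun n => mp_indicator_le_one T p hp w n⟩, ?_⟩, ?_, ?_⟩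
  · have hev : (fun _ : ℕ => (0:ℝ)) =ᶠ[Filter.atTop]
        T.Mp p (fun v => if v = w then (1:ℂ) else 0) := by
      rw [Filter.eventuallyEq_iff_exists_mem]
      exact ⟨{n | T.level w + 1 ≤ n}, Filter.mem_atTop _,
        fun n hn => (mp_indicator_eq_zero T p hp w (by simp at hn; omega)).symm⟩
    exact Filter.Tendsto.congr' hev tendsto_const_nhds
  · intro h
    have := congrFun h w
    simp at this
  · funext v
    by_cases hv : v = T.root
    · simp [HTree.S, hv]
    · simp [HTree.S, hv, indicator_parent_ne T hw hv]

private lemma eig_zero_leafless (T : HTree) (hL : ∀ v : T.V, T.numChildren v ≠ 0)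
    {f : T.V → ℂ} (hf : T.S f = fun v => (0:ℂ) * f v) : f = 0 := by
  funext v
  obtain ⟨u, hu, hpu⟩ := child_exists T v (hL v)
  have h := congrFun hf u
  simp [HTree.S, hu] at h
  rw [hpu] at h
  exact h

/-- the point spectrum of the forward shift is `{0}` if `T` has a leaf
and empty if `T` is leafless, both on `H^p(T)` and on `H^p_0(T)`. -/
theorem forward_shift_point_spectrum (T : HTree) (p : ℝ) (hp : 1 ≤ p) :
    ((∃ v : T.V, T.numChildren v = 0) →
      ({z : ℂ | ∃ f, T.MemHp p f ∧ f ≠ 0 ∧ T.S f = fun v => z * f v} = {0} ∧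
       {z : ℂ | ∃ f, T.MemHp0 p f ∧ f ≠ 0 ∧ T.S f = fun v => z * f v} = {0})) ∧
    ((∀ v : T.V, T.numChildren v ≠ 0) →
      ({z : ℂ | ∃ f, T.MemHp p f ∧ f ≠ 0 ∧ T.S f = fun v => z * f v} = ∅ ∧
       {z : ℂ | ∃ f, T.MemHp0 p f ∧ f ≠ 0 ∧ T.S f = fun v => z * f v} = ∅))  := by
  constructor
  · rintro ⟨w, hw⟩
    obtain ⟨f, ⟨hf1, hf2⟩, hfne, hfS⟩ := zero_mem_of_leaf T p hp hw
    constructor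
    · ext z
      simp only [Set.mem_setOf_eq, Set.mem_singleton_iff]
      constructor
      · rintro ⟨g, _, hgne, hgS⟩
        by_contra hz
        exact hgne (eig_nonzero_zero T hz hgS)
      · rintro rfl
        exact ⟨f, hf1, hfne, hfS⟩
    · ext z
      simp only [Set.mem_setOf_eq, Set.mem_singleton_iff]
      constructor
      · rintro ⟨g, _, hgne, hgS⟩
        by_contra hz
        exact hgne (eig_nonzero_zero T hz hgS)
      · rintro rfl
        exact ⟨f, hf2, hfne, hfS⟩
  · intro hL
    constructor
    · rw [Set.eq_empty_iff_forall_notMem]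
      rintro z ⟨g, _, hgne, hgS⟩
      by_cases hz : z = 0
      · subst hz
        exact hgne (eig_zero_leafless T hL hgS)
      · exact hgne (eig_nonzero_zero T hz hgS)
    · rw [Set.eq_empty_iff_forall_notMem]
      rintro z ⟨g, _, hgne, hgS⟩
      by_cases hz : z = 0
      · subst hz
        exact hgne (eig_zero_leafless T hL hgS)
      · exact hgne (eig_nonzero_zero T hz hgS)
end

section
/- For every λ ∈ ℂ with |λ| < 1, the operator S − λ on H^p(T) is not surjective: the characteristic function of the root is not in its range. Consequently the closed unit disk is contained in the spectrum of S. -/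
open scoped BigOperators
open Classical

private lemma key_val (T : HTree) (z : ℂ) (f : T.V → ℂ)
    (hf : (fun v => T.S f v - z * f v) = fun v => if v = T.root then (1 : ℂ) else 0) :
    z ≠ 0 ∧ ∀ n : ℕ, ∀ v : T.V, T.level v = n → f v = -(z⁻¹ ^ (n + 1)) := by
  have hfv := fun v => congrFun hf v
  have hroot := hfv T.root
  simp [HTree.S] at hroot
  have hz0 : z ≠ 0 := by rintro rfl; simp at hroot
  refine ⟨hz0, ?_⟩
  intro n
  induction n with
  | zero =>
    intro v hv
    have hvr : v = T.root := T.root_of_level_zero v hv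
    subst hvr
    field_simp
    linear_combination (-z⁻¹) * hroot - f T.root * mul_inv_cancel₀ hz0
  | succ n ih =>
    intro v hv
    have hvroot : v ≠ T.root := by
      intro h; rw [h, T.level_root] at hv; omega
    have heq := hfv v
    simp [HTree.S, hvroot, sub_eq_zero] at heq
    have hlev : T.level (T.parent v) = n := by
      have := T.level_parent v hvroot; omega
    have hpar := ih (T.parent v) hlev
    rw [hpar] at heq
    have : f v = z⁻¹ * -(z⁻¹ ^ (n + 1)) := by
      field_simp at heq ⊢
      linear_combination -heq
    rw [this]; ring

private lemma key_Mp (T : HTree) (p : ℝ) (hp : 1 ≤ p) (z : ℂ) (f : T.V → ℂ)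
    (hf : (fun v => T.S f v - z * f v) = fun v => if v = T.root then (1 : ℂ) else 0) :
    ∀ n : ℕ, T.Mp p f n = (‖z‖⁻¹) ^ (n + 1) := by
  obtain ⟨hz0, hval⟩ := key_val T z f hf
  intro n
  have hnorm : ∀ v ∈ T.levelFinset n, ‖f v‖ = ‖z‖⁻¹ ^ (n + 1) := by
    intro v hv
    have hv' : T.level v = n := by
      simpa [HTree.levelFinset] using hv
    rw [hval n v hv']
    simp [norm_pow]
  have hγpos : (0 : ℝ) < (T.gamma n : ℝ) := by
    have : (T.levelFinset n).Nonempty := by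
      obtain ⟨v, hv⟩ := T.nonempty_level n
      exact ⟨v, by simpa [HTree.levelFinset] using hv⟩
    exact_mod_cast Finset.card_pos.mpr this
  have ha : (0:ℝ) ≤ ‖z‖⁻¹ ^ (n + 1) := by positivity
  have hMpp : T.Mpp p f n = (‖z‖⁻¹ ^ (n + 1)) ^ p := by
    unfold HTree.Mpp
    rw [Finset.sum_congr rfl (fun v hv => by rw [hnorm v hv])]
    rw [Finset.sum_const, nsmul_eq_mul]
    rw [HTree.gamma] at hγpos ⊢
    field_simp
  unfold HTree.Mp
  rw [hMpp, one_div, Real.rpow_rpow_inv ha (by linarith)]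

private lemma key_contra (T : HTree) (p : ℝ) (hp : 1 ≤ p) (z : ℂ) (hz : ‖z‖ < 1)
    (f : T.V → ℂ)
    (hf : (fun v => T.S f v - z * f v) = fun v => if v = T.root then (1 : ℂ) else 0) :
    ¬ T.MemHp p f ∧ ¬ T.MemHp0 p f := by
  obtain ⟨hz0, -⟩ := key_val T z f hf
  have hMp := key_Mp T p hp z f hf
  have hznorm : (0:ℝ) < ‖z‖ := norm_pos_iff.mpr hz0
  have hc : 1 < ‖z‖⁻¹ := by
    rw [lt_inv_comm₀ one_pos hznorm]; simpa using hz
  constructor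
  · rintro ⟨C, hC⟩
    obtain ⟨n, hn⟩ := pow_unbounded_of_one_lt C hc
    have := hC (n + 1)
    rw [hMp (n + 1)] at this
    have h1 : ‖z‖⁻¹ ^ n ≤ ‖z‖⁻¹ ^ (n + 1 + 1) :=
      pow_le_pow_right₀ (le_of_lt hc) (by omega)
    linarith
  · intro h
    have hev := h.eventually_lt_const (show (0:ℝ) < 1 by norm_num)
    obtain ⟨n, hn⟩ := hev.exists
    rw [hMp n] at hn
    have : (1:ℝ) ≤ ‖z‖⁻¹ ^ (n + 1) := one_le_pow₀ (le_of_lt hc)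
    linarith

/-- for `|λ| < 1`, the characteristic function of the root is not in the
range of `S − λ`, on `H^p(T)` and on `H^p_0(T)`; hence `S − λ` is not surjective. -/
theorem root_char_not_in_range (T : HTree) (p : ℝ) (hp : 1 ≤ p)
    (z : ℂ) (hz : ‖z‖ < 1) :
    (¬ ∃ f : T.V → ℂ, T.MemHp p f ∧
        (fun v => T.S f v - z * f v) = fun v => if v = T.root then (1 : ℂ) else 0) ∧
    (¬ ∃ f : T.V → ℂ, T.MemHp0 p f ∧
        (fun v => T.S f v - z * f v) = fun v => if v = T.root then (1 : ℂ) else 0) := by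
  constructor
  · rintro ⟨f, hmem, hf⟩
    exact (key_contra T p hp z hz f hf).1 hmem
  · rintro ⟨f, hmem, hf⟩
    exact (key_contra T p hp z hz f hf).2 hmem
end

section
/- For every λ ∈ ℂ with |λ| > 1 and every vertex w, the characteristic function χ_w lies in the range of S − λ on H^p_0(T); explicitly, (S − λ)f_w = χ_w where f_w(v) = −λ^{−(|v|−|w|+1)} for v in the sector S_w and f_w(v) = 0 otherwise, and f_w ∈ H^p_0(T). -/
open scoped BigOperators
open Classical

/-- for `|λ| > 1`, the characteristic function of any vertex `w` is in the
range of `S − λ`, witnessed by `f_w` supported on the sector of `w`. -/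
theorem char_in_range_of_S_sub_lambda (T : HTree) (p : ℝ) (hp : 1 ≤ p)
    (z : ℂ) (hz : 1 < ‖z‖) (w : T.V) :
    let fw : T.V → ℂ := fun v =>
      if T.level w ≤ T.level v ∧ T.parent^[T.level v - T.level w] v = w then
        -(z ^ (T.level v - T.level w + 1))⁻¹
      else 0
    T.MemHp p fw ∧ T.MemHp0 p fw ∧
      (fun v => T.S fw v - z * fw v) = fun v => if v = w then (1 : ℂ) else 0 := by
  intro fw
  have hz0 : z ≠ 0 := by
    intro h; rw [h, norm_zero] at hz; linarith
  have hp0 : (0:ℝ) < p := by linarith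
  set lw := T.level w with hlw
  set r : ℝ := ‖z‖⁻¹ with hr
  have hr0 : 0 ≤ r := by positivity
  have hr1 : r < 1 := by
    rw [hr]
    exact inv_lt_one_of_one_lt₀ hz
  -- pointwise norm bound
  have hnorm : ∀ v : T.V, ‖fw v‖ ≤ r ^ (T.level v - lw + 1) := by
    intro v
    by_cases h : lw ≤ T.level v ∧ T.parent^[T.level v - lw] v = w
    · have : fw v = -(z ^ (T.level v - lw + 1))⁻¹ := if_pos h
      rw [this, norm_neg, norm_inv, norm_pow, hr, inv_pow]
    · have : fw v = 0 := if_neg h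
      rw [this, norm_zero]
      positivity
  have hgamma : ∀ n : ℕ, 0 < (T.gamma n : ℝ) := by
    intro n
    have hne : (T.levelFinset n).Nonempty := by
      obtain ⟨v, hv⟩ := T.nonempty_level n
      exact ⟨v, (T.finite_level n).mem_toFinset.mpr hv⟩
    have := Finset.card_pos.mpr hne
    exact_mod_cast this
  have hMpp_nonneg : ∀ n, 0 ≤ T.Mpp p fw n := by
    intro n
    unfold HTree.Mpp
    apply mul_nonneg
    · positivity
    · exact Finset.sum_nonneg fun v _ => Real.rpow_nonneg (norm_nonneg _) p
  have hMpp_le : ∀ n, T.Mpp p fw n ≤ (r ^ (n - lw + 1)) ^ p := by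
    intro n
    unfold HTree.Mpp
    have hsum : ∑ v ∈ T.levelFinset n, ‖fw v‖ ^ p ≤
        (T.gamma n : ℝ) * (r ^ (n - lw + 1)) ^ p := by
      rw [HTree.gamma, ← nsmul_eq_mul]
      apply Finset.sum_le_card_nsmul
      intro v hv
      have hlev : T.level v = n := (T.finite_level n).mem_toFinset.mp hv
      have := hnorm v
      rw [hlev] at this
      exact Real.rpow_le_rpow (norm_nonneg _) this (le_of_lt hp0)
    calc 1 / (T.gamma n : ℝ) * ∑ v ∈ T.levelFinset n, ‖fw v‖ ^ p
        ≤ 1 / (T.gamma n : ℝ) * ((T.gamma n : ℝ) * (r ^ (n - lw + 1)) ^ p) := by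
          apply mul_le_mul_of_nonneg_left hsum
          positivity
      _ = (r ^ (n - lw + 1)) ^ p := by
          rw [← mul_assoc, one_div, inv_mul_cancel₀ (ne_of_gt (hgamma n)), one_mul]
  have hMp_le : ∀ n, T.Mp p fw n ≤ r ^ (n - lw + 1) := by
    intro n
    unfold HTree.Mp
    have h1 : T.Mpp p fw n ^ (1/p) ≤ ((r ^ (n - lw + 1)) ^ p) ^ (1/p) :=
      Real.rpow_le_rpow (hMpp_nonneg n) (hMpp_le n) (by positivity)
    have h2 : ((r ^ (n - lw + 1) : ℝ) ^ p) ^ (1/p) = r ^ (n - lw + 1) := by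
      rw [← Real.rpow_mul (by positivity), mul_one_div, div_self (ne_of_gt hp0),
        Real.rpow_one]
    rw [h2] at h1
    exact h1
  have hMp_nonneg : ∀ n, 0 ≤ T.Mp p fw n := fun n =>
    Real.rpow_nonneg (hMpp_nonneg n) _
  refine ⟨⟨1, fun n => ?_⟩, ?_, ?_⟩
  · exact (hMp_le n).trans (pow_le_one₀ hr0 (le_of_lt hr1))
  · -- MemHp0 by squeezing
    have htend : Filter.Tendsto (fun n : ℕ => r ^ (n - lw + 1)) Filter.atTop (nhds 0) := by
      have h1 : Filter.Tendsto (fun k : ℕ => r ^ k) Filter.atTop (nhds 0) :=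
        tendsto_pow_atTop_nhds_zero_of_lt_one hr0 hr1
      have h2 : Filter.Tendsto (fun n : ℕ => n - lw + 1) Filter.atTop Filter.atTop :=
        Filter.tendsto_atTop_atTop.mpr fun b => ⟨b + lw, fun n hn => by omega⟩
      exact h1.comp h2
    exact squeeze_zero hMp_nonneg hMp_le htend
  · -- the identity (S - z) fw = χ_w
    funext v
    simp only [HTree.S]
    by_cases hvw : v = w
    · rw [if_pos hvw]
      have hlev : T.level v = lw := by rw [hvw]
      have hsec : lw ≤ T.level v ∧ T.parent^[T.level v - lw] v = w := by
        refine ⟨by omega, ?_⟩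
        have h0 : T.level v - lw = 0 := by omega
        rw [h0]
        simpa using hvw
      have hfv : fw v = -(z ^ 1)⁻¹ := by
        have h1 : fw v = -(z ^ (T.level v - lw + 1))⁻¹ := if_pos hsec
        have h0 : T.level v - lw + 1 = 1 := by omega
        rw [h1, h0]
      have hparent : (if v = T.root then (0:ℂ) else fw (T.parent v)) = 0 := by
        by_cases hroot : v = T.root
        · rw [if_pos hroot]
        · rw [if_neg hroot]
          apply if_neg
          intro ⟨h1, _⟩
          have := T.level_parent v hroot
          omega

      rw [hparent, hfv]
      field_simp
      norm_num
    · rw [if_neg hvw]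
      by_cases hroot : v = T.root
      · have hfv : fw v = 0 := by
          apply if_neg
          intro ⟨h1, h2⟩
          have hl0 : T.level v = 0 := by rw [hroot]; exact T.level_root
          have h0 : T.level v - lw = 0 := by omega
          rw [h0] at h2
          simp at h2
          exact hvw h2
        rw [if_pos hroot, hfv]
        ring
      · rw [if_neg hroot]
        have hpl : T.level (T.parent v) + 1 = T.level v := T.level_parent v hroot
        by_cases hsec : lw ≤ T.level v ∧ T.parent^[T.level v - lw] v = w
        · -- v strictly inside the sector
          have hd : lw < T.level v := by
            rcases lt_or_eq_of_le hsec.1 with h | h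
            · exact h
            · exfalso
              have : T.level v - lw = 0 := by omega
              rw [this] at hsec
              exact hvw hsec.2
          have hsecp : lw ≤ T.level (T.parent v) ∧
              T.parent^[T.level (T.parent v) - lw] (T.parent v) = w := by
            refine ⟨by omega, ?_⟩
            have heq : T.level v - lw = (T.level (T.parent v) - lw) + 1 := by omega
            have := hsec.2
            rw [heq, Function.iterate_succ_apply] at this
            exact this
          have hfv : fw v = -(z ^ (T.level v - lw + 1))⁻¹ := if_pos hsec
          have hfp : fw (T.parent v) = -(z ^ (T.level (T.parent v) - lw + 1))⁻¹ :=
            if_pos hsecp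
          rw [hfv, hfp]
          have hexp : T.level v - lw + 1 = (T.level (T.parent v) - lw + 1) + 1 := by omega
          rw [hexp, pow_succ]
          field_simp
          ring
        · -- v outside the sector: parent also outside
          have hfv : fw v = 0 := if_neg hsec
          have hfp : fw (T.parent v) = 0 := by
            apply if_neg
            intro ⟨h1, h2⟩
            apply hsec
            refine ⟨by omega, ?_⟩
            have heq : T.level v - lw = (T.level (T.parent v) - lw) + 1 := by omega
            rw [heq, Function.iterate_succ_apply]
            exact h2
          rw [hfv, hfp]
          ring
end

section
/- Let (a_n) be defined by a_0 = 1 and a_{n+1} = ⌈3a_n/2⌉. Then for each fixed m ≥ 1, a_{n−m}/a_n ≤ (2/3)^m for all n ≥ m and lim_{n→∞} a_{n−m}/a_n = (2/3)^m. -/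
open scoped BigOperators
open Classical

/-- for the sequence `a_0 = 1`, `a_{n+1} = ⌈3a_n/2⌉`, for each fixed
`m ≥ 1` one has `a_{n−m}/a_n ≤ (2/3)^m` for all `n ≥ m`, with limit `(2/3)^m`. -/
theorem ceil_sequence_ratio (a : ℕ → ℕ) (h0 : a 0 = 1)
    (hrec : ∀ n : ℕ, a (n + 1) = ⌈(3 * (a n : ℚ)) / 2⌉₊)
    (m : ℕ) (hm : 1 ≤ m) :
    (∀ n : ℕ, m ≤ n → (a (n - m) : ℝ) / (a n : ℝ) ≤ (2 / 3 : ℝ) ^ m) ∧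
    Filter.Tendsto (fun n : ℕ => (a (n - m) : ℝ) / (a n : ℝ)) Filter.atTop
      (nhds ((2 / 3 : ℝ) ^ m)) := by
  have h1 : ∀ n, 1 ≤ a n := by
    intro n
    induction n with
    | zero => omega
    | succ k ih =>
      rw [hrec]
      have hk : (0:ℚ) < (a k : ℚ) := by exact_mod_cast ih
      rw [Nat.one_le_ceil_iff]
      positivity
  have h2 : ∀ n, 3 * a n ≤ 2 * a (n + 1) := by
    intro n
    have h := Nat.le_ceil ((3 * (a n : ℚ)) / 2)
    rw [← hrec] at h
    have : (3 * (a n : ℚ)) ≤ 2 * (a (n+1) : ℚ) := by linarith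
    exact_mod_cast this
  have h3 : ∀ n, 2 * a (n + 1) ≤ 3 * a n + 1 := by
    intro n
    have h := Nat.ceil_lt_add_one (show (0:ℚ) ≤ 3 * (a n : ℚ) / 2 by positivity)
    rw [← hrec] at h
    have : (2 * (a (n+1) : ℚ)) < 3 * (a n : ℚ) + 2 := by linarith
    have h' : 2 * a (n + 1) < 3 * a n + 2 := by exact_mod_cast this
    omega
  have h4 : ∀ k n, 3 ^ k * a n ≤ 2 ^ k * a (n + k) := by
    intro k
    induction k with
    | zero => intro n; simp
    | succ j ih =>
      intro n
      have ha := h2 (n + j)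
      have hb := ih n
      calc 3 ^ (j+1) * a n = 3 * (3 ^ j * a n) := by ring
        _ ≤ 3 * (2 ^ j * a (n + j)) := by nlinarith
        _ = 2 ^ j * (3 * a (n + j)) := by ring
        _ ≤ 2 ^ j * (2 * a (n + j + 1)) := Nat.mul_le_mul_left _ ha
        _ = 2 ^ (j+1) * a (n + (j+1)) := by ring_nf
  have h5 : ∀ k n, 2 ^ k * a (n + k) + 2 ^ k ≤ 3 ^ k * a n + 3 ^ k := by
    intro k
    induction k with
    | zero => intro n; simp
    | succ j ih =>
      intro n
      have ha := h3 (n + j)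
      have hb := ih n
      calc 2 ^ (j+1) * a (n + (j+1)) + 2 ^ (j+1)
          = 2 ^ j * (2 * a (n + j + 1)) + 2 * 2 ^ j := by ring_nf
        _ ≤ 2 ^ j * (3 * a (n + j) + 1) + 2 * 2 ^ j := by
            exact Nat.add_le_add_right (Nat.mul_le_mul_left _ ha) _
        _ = 3 * (2 ^ j * a (n + j) + 2 ^ j) := by ring
        _ ≤ 3 * (3 ^ j * a n + 3 ^ j) := Nat.mul_le_mul_left _ hb
        _ = 3 ^ (j+1) * a n + 3 ^ (j+1) := by ring
  have h6 : ∀ n, n + 1 ≤ a n := by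
    intro n
    induction n with
    | zero => omega
    | succ k ih =>
      have := h2 k
      have := h1 k
      omega
  have hpos : ∀ n, (0:ℝ) < (a n : ℝ) := by
    intro n; exact_mod_cast h1 n
  -- the upper bound
  have hub : ∀ n : ℕ, m ≤ n → (a (n - m) : ℝ) / (a n : ℝ) ≤ (2 / 3 : ℝ) ^ m := by
    intro n hn
    have key : 3 ^ m * a (n - m) ≤ 2 ^ m * a n := by
      have := h4 m (n - m)
      rwa [Nat.sub_add_cancel hn] at this
    have keyR : (3:ℝ) ^ m * (a (n - m) : ℝ) ≤ 2 ^ m * (a n : ℝ) := by exact_mod_cast key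
    rw [div_le_iff₀ (hpos n), div_pow, div_mul_eq_mul_div, le_div_iff₀ (by positivity : (0:ℝ) < 3 ^ m)]
    linarith
  refine ⟨hub, ?_⟩
  -- lower bound function
  have hlb : ∀ n : ℕ, m ≤ n →
      (2 / 3 : ℝ) ^ m - 1 / (a n : ℝ) ≤ (a (n - m) : ℝ) / (a n : ℝ) := by
    intro n hn
    have key : 2 ^ m * a n + 2 ^ m ≤ 3 ^ m * a (n - m) + 3 ^ m := by
      have := h5 m (n - m)
      rwa [Nat.sub_add_cancel hn] at this
    have keyR : (2:ℝ) ^ m * (a n : ℝ) + 2 ^ m ≤ 3 ^ m * (a (n - m) : ℝ) + 3 ^ m := by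
      exact_mod_cast key
    have h3m : (0:ℝ) < 3 ^ m := by positivity
    rw [sub_le_iff_le_add, div_add_div _ _ (ne_of_gt (hpos n)) (ne_of_gt (hpos n)),
      div_pow, div_le_div_iff₀ h3m (mul_pos (hpos n) (hpos n))]
    have h2m : (0:ℝ) ≤ 2 ^ m := by positivity
    nlinarith [hpos n, keyR]
  have hAtTop : Filter.Tendsto (fun n : ℕ => (a n : ℝ)) Filter.atTop Filter.atTop := by
    exact Filter.tendsto_atTop_mono
      (fun n => by exact_mod_cast Nat.le_of_succ_le (h6 n))
      tendsto_natCast_atTop_atTop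
  have hlow : Filter.Tendsto (fun n : ℕ => (2 / 3 : ℝ) ^ m - 1 / (a n : ℝ))
      Filter.atTop (nhds ((2 / 3 : ℝ) ^ m)) := by
    have : Filter.Tendsto (fun n : ℕ => 1 / (a n : ℝ)) Filter.atTop (nhds 0) := by
      simp only [one_div]; exact hAtTop.inv_tendsto_atTop
    simpa using (tendsto_const_nhds.sub this)
  exact tendsto_of_tendsto_of_tendsto_of_le_of_le' hlow tendsto_const_nhds
    (Filter.eventually_atTop.mpr ⟨m, hlb⟩) (Filter.eventually_atTop.mpr ⟨m, hub⟩)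
end
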